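/- Let X be a Hilbert space, S₁, S₂ nonempty closed convex disjoint sets, α₁, α₂ > 0 with α₁+α₂ = 1, and p > 1. Then the set of minimizers of x ↦ α₁ d(x,S₁)^p + α₂ d(x,S₂)^p coincides with the set of fixed points of the map x ↦ (α₁^{1/(p−1)} P₁(x) + α₂^{1/(p−1)} P₂(x)) / (α₁^{1/(p−1)} + α₂^{1/(p−1)}), where P_i is the metric projection onto S_i. -/

import Mathlib

open Metric
open scoped RealInnerProductSpace



private lemma swap_coeff {X : Type*} [AddCommGroup X] [Module ℝ X]
    {a b c₁ c₂ : ℝ} {w₁ w₂ : X} (ha : a ≠ 0)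
    (h : a • w₁ + b • w₂ = 0) (hc : b * c₁ = a * c₂) :
    c₁ • w₁ + c₂ • w₂ = 0 := by
  have key : c₁ / a * b = c₂ := by field_simp; nlinarith [hc]
  have : c₁ • w₁ + c₂ • w₂ = (c₁ / a) • (a • w₁ + b • w₂) := by
    rw [smul_add, smul_smul, smul_smul, div_mul_cancel₀ _ ha, key]
  rw [this, h, smul_zero]

private lemma tangent_rpow {p d t : ℝ} (hp : 1 ≤ p) (hd : 0 < d) (ht : 0 ≤ t) :
    d ^ p + p * d ^ (p - 1) * (t - d) ≤ t ^ p := by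
  have hs : (-1 : ℝ) ≤ t / d - 1 := by
    have : 0 ≤ t / d := div_nonneg ht hd.le
    linarith
  have hb := one_add_mul_self_le_rpow_one_add hs hp
  have h1 : (1 : ℝ) + (t / d - 1) = t / d := by ring
  rw [h1] at hb
  have hdiv : (t / d) ^ p = t ^ p / d ^ p := Real.div_rpow ht hd.le p
  rw [hdiv] at hb
  have hdp : (0 : ℝ) < d ^ p := Real.rpow_pos_of_pos hd p
  have hdd : d ^ (p - 1) * d = d ^ p := by
    rw [← Real.rpow_add_one hd.ne' (p - 1)]; ring_nf
  have hb2 : (1 + p * (t / d - 1)) * d ^ p ≤ t ^ p := by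
    rw [← le_div_iff₀ hdp]; exact hb
  have hdp1 : d ^ (p - 1) * d = d ^ p := hdd
  have hfrac : d ^ p / d = d ^ (p-1) := by
    rw [← hdd]; field_simp
  calc d ^ p + p * d ^ (p - 1) * (t - d)
      = (1 + p * (t / d - 1)) * d ^ p := by
        field_simp
        rw [← hdd]; ring
    _ ≤ t ^ p := hb2


private lemma myHasDerivAt_norm_rpow {X : Type*} [NormedAddCommGroup X]
    [InnerProductSpace ℝ X] (w v : X) (hw : w ≠ 0) {p : ℝ} (hp : 1 < p) :
    HasDerivAt (fun t : ℝ => ‖w + t • v‖ ^ p) (p * ‖w‖ ^ (p - 2) * ⟪w, v⟫) 0 := by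
  have hwn : (0:ℝ) < ‖w‖ := norm_pos_iff.mpr hw
  set h : ℝ → ℝ := fun t => ‖w‖ ^ 2 + 2 * ⟪w, v⟫ * t + ‖v‖ ^ 2 * t ^ 2 with hh
  have hd : HasDerivAt h (2 * ⟪w, v⟫) 0 := by
    have h1 : HasDerivAt (fun t : ℝ => 2 * ⟪w, v⟫ * t) (2 * ⟪w, v⟫) 0 := by
      simpa using (hasDerivAt_id (0:ℝ)).const_mul (2 * ⟪w, v⟫)
    have h2 : HasDerivAt (fun t : ℝ => ‖v‖ ^ 2 * t ^ 2) 0 0 := by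
      simpa using (hasDerivAt_pow 2 (0:ℝ)).const_mul (‖v‖ ^ 2)
    have := ((hasDerivAt_const (0:ℝ) (‖w‖ ^ 2)).add h1).add h2
    simp only [zero_add, add_zero] at this
    exact this
  have hh0 : h 0 = ‖w‖ ^ 2 := by simp [hh]
  have hg : HasDerivAt (fun s : ℝ => s ^ (p / 2))
      (p / 2 * (‖w‖ ^ 2) ^ (p / 2 - 1)) (h 0) := by
    rw [hh0]
    exact Real.hasDerivAt_rpow_const (Or.inl (by positivity))
  have hcomp := HasDerivAt.comp 0 hg hd
  have hval : ∀ u : X, ((fun s : ℝ => s ^ (p / 2)) ∘ h) =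
      fun t => ‖w + t • v‖ ^ p := by
    intro u
    funext t
    have hexp : h t = ‖w + t • v‖ ^ 2 := by
      simp only [hh]
      rw [norm_add_sq_real, real_inner_smul_right, norm_smul]
      simp only [Real.norm_eq_abs, mul_pow, sq_abs]
      ring
    simp only [Function.comp]
    rw [hexp, ← Real.rpow_natCast ‖w + t • v‖ 2, ← Real.rpow_mul (norm_nonneg _)]
    congr 1
    push_cast
    ring
  have hval2 : p / 2 * (‖w‖ ^ 2) ^ (p / 2 - 1) * (2 * ⟪w, v⟫)
      = p * ‖w‖ ^ (p - 2) * ⟪w, v⟫ := by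
    rw [← Real.rpow_natCast ‖w‖ 2, ← Real.rpow_mul (norm_nonneg _)]
    ring_nf
  rw [hval w, hval2] at hcomp
  exact hcomp

private lemma inner_le_mul_infDist {X : Type*} [NormedAddCommGroup X]
    [InnerProductSpace ℝ X] {S : Set X} (hS : S.Nonempty) (hv : Convex ℝ S)
    {x : X} {Px : X} (hmem : Px ∈ S) (hdist : dist x Px = infDist x S)
    (y : X) : ⟪x - Px, y - Px⟫ ≤ ‖x - Px‖ * infDist y S := by
  have hproj : ∀ s ∈ S, ⟪x - Px, s - Px⟫ ≤ 0 := by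
    rw [← norm_eq_iInf_iff_real_inner_le_zero hv hmem]
    rw [dist_eq_norm, infDist_eq_iInf] at hdist
    rw [hdist]
    congr 1; funext s; rw [dist_eq_norm]
  have key : ∀ s ∈ S, ⟪x - Px, y - Px⟫ ≤ ‖x - Px‖ * dist y s := by
    intro s hs
    have h1 : ⟪x - Px, y - Px⟫ = ⟪x - Px, y - s⟫ + ⟪x - Px, s - Px⟫ := by
      rw [← inner_add_right]; congr 1; abel
    have h2 : ⟪x - Px, y - s⟫ ≤ ‖x - Px‖ * ‖y - s‖ := real_inner_le_norm _ _
    have h3 := hproj s hs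
    rw [dist_eq_norm]
    linarith
  rcases eq_or_lt_of_le (norm_nonneg (x - Px)) with h0 | h0
  · calc ⟪x - Px, y - Px⟫ ≤ ‖x - Px‖ * dist y hS.some := key _ hS.some_mem
      _ = 0 := by rw [← h0]; ring
      _ ≤ _ := by rw [← h0]; simp
  · have : Nonempty S := hS.to_subtype
    rw [infDist_eq_iInf, mul_comm, ← div_le_iff₀ h0]
    apply le_ciInf
    intro s
    rw [div_le_iff₀ h0, mul_comm]
    exact key s s.2


private lemma exists_smaller {X : Type*} [NormedAddCommGroup X]
    [InnerProductSpace ℝ X] {S T : Set X} {x z : X} (hxS : x ∈ S) (hzT : z ∈ T)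
    {α β pp : ℝ} (hα : 0 < α) (hβ : 0 < β) (hp : 1 < pp)
    (hdz : dist x z = infDist x T) (hdpos : 0 < infDist x T) :
    ∃ y : X, α * infDist y S ^ pp + β * infDist y T ^ pp <
      α * infDist x S ^ pp + β * infDist x T ^ pp := by
  set D := infDist x T with hD
  set t : ℝ := min (1 / 2) ((β / α) ^ (1 / (pp - 1)) / 2) with ht
  have hpp1 : (0:ℝ) < pp - 1 := by linarith
  have hT0 : (0:ℝ) < (β / α) ^ (1 / (pp - 1)) := Real.rpow_pos_of_pos (by positivity) _
  have ht0 : 0 < t := lt_min (by norm_num) (by positivity)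
  have ht1 : t ≤ 1 / 2 := min_le_left _ _
  refine ⟨x + t • (z - x), ?_⟩
  have hnorm : ‖z - x‖ = D := by rw [← hdz, dist_eq_norm, norm_sub_rev]
  have h1 : infDist (x + t • (z - x)) S ≤ t * D := by
    calc infDist (x + t • (z - x)) S ≤ dist (x + t • (z - x)) x :=
          infDist_le_dist_of_mem hxS
      _ = t * D := by
          rw [dist_eq_norm, add_sub_cancel_left, norm_smul, Real.norm_eq_abs,
            abs_of_pos ht0, hnorm]
  have h2 : infDist (x + t • (z - x)) T ≤ (1 - t) * D := by
    calc infDist (x + t • (z - x)) T ≤ dist (x + t • (z - x)) z :=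
          infDist_le_dist_of_mem hzT
      _ = (1 - t) * D := by
          rw [dist_eq_norm]
          have : x + t • (z - x) - z = -((1 - t) • (z - x)) := by
            rw [sub_smul, one_smul]; abel
          rw [this, norm_neg, norm_smul, Real.norm_eq_abs,
            abs_of_pos (by linarith : (0:ℝ) < 1 - t), hnorm]
  have hxS0 : infDist x S = 0 := infDist_zero_of_mem hxS
  -- scalar estimates
  have htpow : t ^ (pp - 1) < β / α := by
    have hlt : t < (β / α) ^ (1 / (pp - 1)) := lt_of_le_of_lt (min_le_right _ _) (by linarith)
    have := Real.rpow_lt_rpow ht0.le hlt hpp1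
    rwa [← Real.rpow_mul (by positivity : (0:ℝ) ≤ β / α), one_div,
      inv_mul_cancel₀ hpp1.ne', Real.rpow_one] at this
  have htp : t ^ pp = t ^ (pp - 1) * t := by
    rw [← Real.rpow_add_one ht0.ne' (pp - 1)]; ring_nf
  have h1t : (1 - t) ^ pp ≤ 1 - t := by
    have := Real.rpow_le_rpow_of_exponent_ge (by linarith : (0:ℝ) < 1 - t)
      (by linarith : 1 - t ≤ 1) (by linarith : (1:ℝ) ≤ pp)
    simpa using this
  have hscal : α * t ^ pp + β * (1 - t) ^ pp < β := by
    have hα_t : α * (t ^ (pp - 1) * t) < β * t := by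
      have h' : t ^ (pp - 1) * α < β := (lt_div_iff₀ hα).mp htpow
      nlinarith [ht0]
    nlinarith [h1t, hβ]
  -- combine
  have hDp : (0:ℝ) < D ^ pp := Real.rpow_pos_of_pos hdpos _
  have e1 : infDist (x + t • (z - x)) S ^ pp ≤ (t * D) ^ pp :=
    Real.rpow_le_rpow infDist_nonneg h1 (by linarith)
  have e2 : infDist (x + t • (z - x)) T ^ pp ≤ ((1 - t) * D) ^ pp :=
    Real.rpow_le_rpow infDist_nonneg h2 (by linarith)
  have m1 : (t * D) ^ pp = t ^ pp * D ^ pp := Real.mul_rpow ht0.le hdpos.le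
  have m2 : ((1 - t) * D) ^ pp = (1 - t) ^ pp * D ^ pp :=
    Real.mul_rpow (by linarith) hdpos.le
  have hz0 : (0:ℝ) ^ pp = 0 := Real.zero_rpow (by positivity)
  rw [hxS0, hz0, mul_zero, zero_add]
  have final : α * (t ^ pp * D ^ pp) + β * ((1 - t) ^ pp * D ^ pp) < β * D ^ pp := by
    nlinarith [hscal, hDp]
  nlinarith [e1, e2, m1, m2, hα, hβ, final]


set_option maxHeartbeats 1000000

theorem argmin_eq_fixedPoints {X : Type*} [NormedAddCommGroup X]
    [InnerProductSpace ℝ X] [CompleteSpace X]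
    (S₁ S₂ : Set X) (h₁ : S₁.Nonempty) (h₂ : S₂.Nonempty)
    (hc₁ : IsClosed S₁) (hc₂ : IsClosed S₂)
    (hv₁ : Convex ℝ S₁) (hv₂ : Convex ℝ S₂) (hdisj : S₁ ∩ S₂ = ∅)
    (α₁ α₂ : ℝ) (hα₁ : 0 < α₁) (hα₂ : 0 < α₂) (hsum : α₁ + α₂ = 1)
    (p : ℝ) (hp : 1 < p)
    (P₁ P₂ : X → X)
    (hP₁ : ∀ x, P₁ x ∈ S₁ ∧ dist x (P₁ x) = infDist x S₁)
    (hP₂ : ∀ x, P₂ x ∈ S₂ ∧ dist x (P₂ x) = infDist x S₂) :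
    {x : X | ∀ y : X, α₁ * infDist x S₁ ^ p + α₂ * infDist x S₂ ^ p ≤
        α₁ * infDist y S₁ ^ p + α₂ * infDist y S₂ ^ p} =
      {x : X | x = (α₁ ^ (1 / (p - 1)) + α₂ ^ (1 / (p - 1)))⁻¹ •
        (α₁ ^ (1 / (p - 1)) • P₁ x + α₂ ^ (1 / (p - 1)) • P₂ x)} := by
  have hp0 : (0:ℝ) < p := by linarith
  have hpm1 : (0:ℝ) < p - 1 := by linarith
  set q : ℝ := 1 / (p - 1) with hqdef
  have hqpos : 0 < q := by positivity
  set a : ℝ := α₁ ^ q with hadef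
  set b : ℝ := α₂ ^ q with hbdef
  have hA : 0 < a := Real.rpow_pos_of_pos hα₁ q
  have hB : 0 < b := Real.rpow_pos_of_pos hα₂ q
  have hab : a + b ≠ 0 := by positivity
  -- a ^ (p-1) = α₁ etc.
  have hq1 : q * (p - 1) = 1 := by
    rw [hqdef]; field_simp
  have hq1' : (p - 1) * q = 1 := by rw [mul_comm]; exact hq1
  have hapow : a ^ (p - 1) = α₁ := by
    rw [hadef, ← Real.rpow_mul hα₁.le, hq1, Real.rpow_one]
  have hbpow : b ^ (p - 1) = α₂ := by
    rw [hbdef, ← Real.rpow_mul hα₂.le, hq1, Real.rpow_one]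
  ext x
  simp only [Set.mem_setOf_eq]
  obtain ⟨hm₁, hpd₁⟩ := hP₁ x
  obtain ⟨hm₂, hpd₂⟩ := hP₂ x
  set w₁ : X := x - P₁ x with hw₁def
  set w₂ : X := x - P₂ x with hw₂def
  set d₁ : ℝ := infDist x S₁ with hd₁def
  set d₂ : ℝ := infDist x S₂ with hd₂def
  have hnw₁ : ‖w₁‖ = d₁ := by rw [hw₁def, ← dist_eq_norm, hpd₁]
  have hnw₂ : ‖w₂‖ = d₂ := by rw [hw₂def, ← dist_eq_norm, hpd₂]
  have hd₁0 : 0 ≤ d₁ := infDist_nonneg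
  have hd₂0 : 0 ≤ d₂ := infDist_nonneg
  -- fixed point equation iff vector equation
  have hfp : (x = (a + b)⁻¹ • (a • P₁ x + b • P₂ x)) ↔ a • w₁ + b • w₂ = 0 := by
    have hexp : a • w₁ + b • w₂ = (a + b) • x - (a • P₁ x + b • P₂ x) := by
      rw [hw₁def, hw₂def, smul_sub, smul_sub, add_smul]; abel
    constructor
    · intro hx
      have h1 : (a + b) • x = a • P₁ x + b • P₂ x := by
        conv_lhs => rw [hx]
        rw [smul_smul, mul_inv_cancel₀ hab, one_smul]
      rw [hexp, h1, sub_self]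
    · intro h
      have h1 : (a + b) • x = a • P₁ x + b • P₂ x := by
        rw [hexp] at h
        exact sub_eq_zero.mp h
      rw [← h1, smul_smul, inv_mul_cancel₀ hab, one_smul]
  rw [hfp]
  -- membership in S from zero distance
  have hmemS₁ : d₁ = 0 → x ∈ S₁ := by
    intro h
    have : dist x (P₁ x) = 0 := hpd₁.trans h
    rw [dist_eq_zero] at this
    rw [this]; exact hm₁
  have hmemS₂ : d₂ = 0 → x ∈ S₂ := by
    intro h
    have : dist x (P₂ x) = 0 := hpd₂.trans h
    rw [dist_eq_zero] at this
    rw [this]; exact hm₂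
  have hnotboth : ¬ (d₁ = 0 ∧ d₂ = 0) := by
    rintro ⟨e1, e2⟩
    exact Set.eq_empty_iff_forall_notMem.mp hdisj x ⟨hmemS₁ e1, hmemS₂ e2⟩
  constructor
  · -- minimizer → fixed point
    intro hmin
    -- positivity of distances
    have hd₁pos : 0 < d₁ := by
      rcases hd₁0.lt_or_eq with h | h
      · exact h
      · exfalso
        have hxS₁ : x ∈ S₁ := hmemS₁ h.symm
        have hd₂pos : 0 < d₂ := by
          rcases hd₂0.lt_or_eq with h2 | h2
          · exact h2
          · exact absurd ⟨h.symm, h2.symm⟩ hnotboth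
        obtain ⟨y, hy⟩ := exists_smaller hxS₁ hm₂ hα₁ hα₂ hp hpd₂ hd₂pos
        rw [← hd₁def, ← hd₂def] at hy
        linarith [hmin y]
    have hd₂pos : 0 < d₂ := by
      rcases hd₂0.lt_or_eq with h | h
      · exact h
      · exfalso
        have hxS₂ : x ∈ S₂ := hmemS₂ h.symm
        obtain ⟨y, hy⟩ := exists_smaller hxS₂ hm₁ hα₂ hα₁ hp hpd₁ hd₁pos
        rw [← hd₁def, ← hd₂def] at hy
        linarith [hmin y]
    have hw₁ne : w₁ ≠ 0 := by
      intro h; rw [h, norm_zero] at hnw₁; exact hd₁pos.ne hnw₁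
    have hw₂ne : w₂ ≠ 0 := by
      intro h; rw [h, norm_zero] at hnw₂; exact hd₂pos.ne hnw₂
    set c₁ : ℝ := α₁ * d₁ ^ (p - 2) with hc₁def
    set c₂ : ℝ := α₂ * d₂ ^ (p - 2) with hc₂def
    have hc₁pos : 0 < c₁ := mul_pos hα₁ (Real.rpow_pos_of_pos hd₁pos _)
    have hc₂pos : 0 < c₂ := mul_pos hα₂ (Real.rpow_pos_of_pos hd₂pos _)
    -- gradient is zero
    have hginner : ∀ v : X, c₁ * ⟪w₁, v⟫ + c₂ * ⟪w₂, v⟫ = 0 := by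
      intro v
      set φ : ℝ → ℝ := fun t => α₁ * ‖w₁ + t • v‖ ^ p + α₂ * ‖w₂ + t • v‖ ^ p with hφ
      have hderiv : HasDerivAt φ
          (α₁ * (p * ‖w₁‖ ^ (p - 2) * ⟪w₁, v⟫) + α₂ * (p * ‖w₂‖ ^ (p - 2) * ⟪w₂, v⟫)) 0 :=
        ((myHasDerivAt_norm_rpow w₁ v hw₁ne hp).const_mul α₁).add
          ((myHasDerivAt_norm_rpow w₂ v hw₂ne hp).const_mul α₂)
      have hmin' : IsLocalMin φ 0 := by
        apply Filter.Eventually.of_forall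
        intro t
        have hφ0 : φ 0 = α₁ * d₁ ^ p + α₂ * d₂ ^ p := by
          simp only [hφ, zero_smul, add_zero, hnw₁, hnw₂]
        have hb₁ : infDist (x + t • v) S₁ ≤ ‖w₁ + t • v‖ := by
          calc infDist (x + t • v) S₁ ≤ dist (x + t • v) (P₁ x) :=
                infDist_le_dist_of_mem hm₁
            _ = ‖w₁ + t • v‖ := by
                rw [dist_eq_norm]; congr 1; rw [hw₁def]; abel
        have hb₂ : infDist (x + t • v) S₂ ≤ ‖w₂ + t • v‖ := by
          calc infDist (x + t • v) S₂ ≤ dist (x + t • v) (P₂ x) :=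
                infDist_le_dist_of_mem hm₂
            _ = ‖w₂ + t • v‖ := by
                rw [dist_eq_norm]; congr 1; rw [hw₂def]; abel
        have e₁ : infDist (x + t • v) S₁ ^ p ≤ ‖w₁ + t • v‖ ^ p :=
          Real.rpow_le_rpow infDist_nonneg hb₁ hp0.le
        have e₂ : infDist (x + t • v) S₂ ^ p ≤ ‖w₂ + t • v‖ ^ p :=
          Real.rpow_le_rpow infDist_nonneg hb₂ hp0.le
        have hmy := hmin (x + t • v)
        rw [hφ0]
        simp only [hφ]
        nlinarith [e₁, e₂, hα₁, hα₂, hmy]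
      have hzero := hmin'.hasDerivAt_eq_zero hderiv
      rw [hnw₁, hnw₂] at hzero
      have : p * (c₁ * ⟪w₁, v⟫ + c₂ * ⟪w₂, v⟫) = 0 := by
        rw [hc₁def, hc₂def]; linarith [hzero]
      rcases mul_eq_zero.mp this with h | h
      · exact absurd h hp0.ne'
      · exact h
    have hg : c₁ • w₁ + c₂ • w₂ = 0 := by
      have h := hginner (c₁ • w₁ + c₂ • w₂)
      have h2 : ⟪c₁ • w₁ + c₂ • w₂, c₁ • w₁ + c₂ • w₂⟫ = (0:ℝ) := by
        rw [inner_add_left, real_inner_smul_left, real_inner_smul_left]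
        exact h
      exact inner_self_eq_zero.mp h2
    -- norms relation
    have hnormeq : c₁ * d₁ = c₂ * d₂ := by
      have h' : c₁ • w₁ = -(c₂ • w₂) := by
        rw [← sub_eq_zero]; rw [sub_neg_eq_add]; exact hg
      have := congrArg norm h'
      rw [norm_neg, norm_smul, norm_smul, Real.norm_eq_abs, Real.norm_eq_abs,
        abs_of_pos hc₁pos, abs_of_pos hc₂pos, hnw₁, hnw₂] at this
      exact this
    -- from c-relation to a,b-relation
    have hpow₁ : c₁ * d₁ = α₁ * d₁ ^ (p - 1) := by
      rw [hc₁def, mul_assoc]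
      congr 1
      rw [← Real.rpow_add_one hd₁pos.ne' (p - 2)]
      ring_nf
    have hpow₂ : c₂ * d₂ = α₂ * d₂ ^ (p - 1) := by
      rw [hc₂def, mul_assoc]
      congr 1
      rw [← Real.rpow_add_one hd₂pos.ne' (p - 2)]
      ring_nf
    have hq₁ : (α₁ * d₁ ^ (p - 1)) ^ q = a * d₁ := by
      rw [Real.mul_rpow hα₁.le (Real.rpow_nonneg hd₁0 _), ← Real.rpow_mul hd₁0,
        hq1', Real.rpow_one, hadef]
    have hq₂ : (α₂ * d₂ ^ (p - 1)) ^ q = b * d₂ := by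
      rw [Real.mul_rpow hα₂.le (Real.rpow_nonneg hd₂0 _), ← Real.rpow_mul hd₂0,
        hq1', Real.rpow_one, hbdef]
    have had : a * d₁ = b * d₂ := by
      rw [← hq₁, ← hq₂, ← hpow₁, ← hpow₂, hnormeq]
    -- cross relation and conclusion
    have hmul : (c₁ * d₁) * (b * d₂) = (c₂ * d₂) * (a * d₁) := by
      rw [hnormeq, had]
    have hcross : c₂ * a = c₁ * b := by
      have hd12 : d₁ * d₂ ≠ 0 := by positivity
      have h2 : (c₂ * a) * (d₁ * d₂) = (c₁ * b) * (d₁ * d₂) := by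
        linear_combination -hmul
      exact mul_right_cancel₀ hd12 h2
    exact swap_coeff hc₁pos.ne' hg hcross
  · -- fixed point → minimizer
    intro hvec y
    -- positivity
    have hw₁ne : w₁ ≠ 0 := by
      intro h
      have h2 : w₂ = 0 := by
        rw [h, smul_zero, zero_add, smul_eq_zero] at hvec
        exact hvec.resolve_left hB.ne'
      apply hnotboth
      constructor
      · rw [← hnw₁, h, norm_zero]
      · rw [← hnw₂, h2, norm_zero]
    have hw₂ne : w₂ ≠ 0 := by
      intro h
      have h1 : w₁ = 0 := by
        rw [h, smul_zero, add_zero, smul_eq_zero] at hvec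
        exact hvec.resolve_left hA.ne'
      apply hnotboth
      constructor
      · rw [← hnw₁, h1, norm_zero]
      · rw [← hnw₂, h, norm_zero]
    have hd₁pos : 0 < d₁ := by rw [← hnw₁]; exact norm_pos_iff.mpr hw₁ne
    have hd₂pos : 0 < d₂ := by rw [← hnw₂]; exact norm_pos_iff.mpr hw₂ne
    set c₁ : ℝ := α₁ * d₁ ^ (p - 2) with hc₁def
    set c₂ : ℝ := α₂ * d₂ ^ (p - 2) with hc₂def
    have hc₁pos : 0 < c₁ := mul_pos hα₁ (Real.rpow_pos_of_pos hd₁pos _)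
    have hc₂pos : 0 < c₂ := mul_pos hα₂ (Real.rpow_pos_of_pos hd₂pos _)
    -- norms relation from vector equation
    have had : a * d₁ = b * d₂ := by
      have h' : a • w₁ = -(b • w₂) := by
        rw [← sub_eq_zero, sub_neg_eq_add]; exact hvec
      have := congrArg norm h'
      rw [norm_neg, norm_smul, norm_smul, Real.norm_eq_abs, Real.norm_eq_abs,
        abs_of_pos hA, abs_of_pos hB, hnw₁, hnw₂] at this
      exact this
    -- raise to power (p-1)
    have hpq₁ : (a * d₁) ^ (p - 1) = α₁ * d₁ ^ (p - 1) := by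
      rw [Real.mul_rpow hA.le hd₁0, hapow]
    have hpq₂ : (b * d₂) ^ (p - 1) = α₂ * d₂ ^ (p - 1) := by
      rw [Real.mul_rpow hB.le hd₂0, hbpow]
    have hnormeq' : α₁ * d₁ ^ (p - 1) = α₂ * d₂ ^ (p - 1) := by
      rw [← hpq₁, ← hpq₂, had]
    have hpow₁ : c₁ * d₁ = α₁ * d₁ ^ (p - 1) := by
      rw [hc₁def, mul_assoc]
      congr 1
      rw [← Real.rpow_add_one hd₁pos.ne' (p - 2)]
      ring_nf
    have hpow₂ : c₂ * d₂ = α₂ * d₂ ^ (p - 1) := by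
      rw [hc₂def, mul_assoc]
      congr 1
      rw [← Real.rpow_add_one hd₂pos.ne' (p - 2)]
      ring_nf
    have hnormeq : c₁ * d₁ = c₂ * d₂ := by rw [hpow₁, hpow₂, hnormeq']
    have hmul : (c₁ * d₁) * (b * d₂) = (c₂ * d₂) * (a * d₁) := by
      rw [hnormeq, had]
    have hcross : b * c₁ = a * c₂ := by
      have hd12 : d₁ * d₂ ≠ 0 := by positivity
      have h2 : (b * c₁) * (d₁ * d₂) = (a * c₂) * (d₁ * d₂) := by
        linear_combination hmul
      exact mul_right_cancel₀ hd12 h2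
    have hg : c₁ • w₁ + c₂ • w₂ = 0 := swap_coeff hA.ne' hvec hcross
    -- the subgradient inequality
    set t₁ : ℝ := infDist y S₁ with ht₁def
    set t₂ : ℝ := infDist y S₂ with ht₂def
    have ht₁0 : 0 ≤ t₁ := infDist_nonneg
    have ht₂0 : 0 ≤ t₂ := infDist_nonneg
    have e₁ : d₁ ^ p + p * d₁ ^ (p - 1) * (t₁ - d₁) ≤ t₁ ^ p :=
      tangent_rpow hp.le hd₁pos ht₁0
    have e₂ : d₂ ^ p + p * d₂ ^ (p - 1) * (t₂ - d₂) ≤ t₂ ^ p :=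
      tangent_rpow hp.le hd₂pos ht₂0
    have i₁ : ⟪w₁, y - P₁ x⟫ ≤ d₁ * t₁ := by
      have h := inner_le_mul_infDist h₁ hv₁ hm₁ hpd₁ y
      rw [← hw₁def, hnw₁, ← ht₁def] at h
      exact h
    have i₂ : ⟪w₂, y - P₂ x⟫ ≤ d₂ * t₂ := by
      have h := inner_le_mul_infDist h₂ hv₂ hm₂ hpd₂ y
      rw [← hw₂def, hnw₂, ← ht₂def] at h
      exact h
    have winner₁ : ⟪w₁, y - x⟫ = ⟪w₁, y - P₁ x⟫ - d₁ ^ (2:ℕ) := by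
      have hsplit : y - x = (y - P₁ x) - w₁ := by rw [hw₁def]; abel
      rw [hsplit, inner_sub_right, real_inner_self_eq_norm_sq, hnw₁]
    have winner₂ : ⟪w₂, y - x⟫ = ⟪w₂, y - P₂ x⟫ - d₂ ^ (2:ℕ) := by
      have hsplit : y - x = (y - P₂ x) - w₂ := by rw [hw₂def]; abel
      rw [hsplit, inner_sub_right, real_inner_self_eq_norm_sq, hnw₂]
    have hid₁ : d₁ ^ (p - 1) = d₁ ^ (p - 2) * d₁ := by
      rw [← Real.rpow_add_one hd₁pos.ne' (p - 2)]; ring_nf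
    have hid₂ : d₂ ^ (p - 1) = d₂ ^ (p - 2) * d₂ := by
      rw [← Real.rpow_add_one hd₂pos.ne' (p - 2)]; ring_nf
    have hr₁ : (0:ℝ) < d₁ ^ (p - 2) := Real.rpow_pos_of_pos hd₁pos _
    have hr₂ : (0:ℝ) < d₂ ^ (p - 2) := Real.rpow_pos_of_pos hd₂pos _
    have key₁ : α₁ * d₁ ^ p + p * c₁ * ⟪w₁, y - x⟫ ≤ α₁ * t₁ ^ p := by
      have s2 : p * d₁ ^ (p - 2) * ⟪w₁, y - x⟫ ≤ p * d₁ ^ (p - 1) * (t₁ - d₁) := by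
        rw [hid₁, winner₁]
        have hsq : d₁ ^ (2:ℕ) = d₁ * d₁ := sq d₁
        have base : ⟪w₁, y - P₁ x⟫ - d₁ * d₁ ≤ d₁ * t₁ - d₁ * d₁ := by linarith [i₁]
        have hmono := mul_le_mul_of_nonneg_left base (mul_nonneg hp0.le hr₁.le)
        rw [hsq]
        linarith [hmono]
      have s3 : d₁ ^ p + p * d₁ ^ (p - 2) * ⟪w₁, y - x⟫ ≤ t₁ ^ p := by linarith
      have hfin := mul_le_mul_of_nonneg_left s3 hα₁.le
      rw [hc₁def]
      linarith [hfin]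
    have key₂ : α₂ * d₂ ^ p + p * c₂ * ⟪w₂, y - x⟫ ≤ α₂ * t₂ ^ p := by
      have s2 : p * d₂ ^ (p - 2) * ⟪w₂, y - x⟫ ≤ p * d₂ ^ (p - 1) * (t₂ - d₂) := by
        rw [hid₂, winner₂]
        have hsq : d₂ ^ (2:ℕ) = d₂ * d₂ := sq d₂
        have base : ⟪w₂, y - P₂ x⟫ - d₂ * d₂ ≤ d₂ * t₂ - d₂ * d₂ := by linarith [i₂]
        have hmono := mul_le_mul_of_nonneg_left base (mul_nonneg hp0.le hr₂.le)
        rw [hsq]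
        linarith [hmono]
      have s3 : d₂ ^ p + p * d₂ ^ (p - 2) * ⟪w₂, y - x⟫ ≤ t₂ ^ p := by linarith
      have hfin := mul_le_mul_of_nonneg_left s3 hα₂.le
      rw [hc₂def]
      linarith [hfin]
    have hsum0 : c₁ * ⟪w₁, y - x⟫ + c₂ * ⟪w₂, y - x⟫ = 0 := by
      have h : ⟪c₁ • w₁ + c₂ • w₂, y - x⟫ = (0:ℝ) := by
        rw [hg, inner_zero_left]
      rw [inner_add_left, real_inner_smul_left, real_inner_smul_left] at h
      exact h
    have hps : p * (c₁ * ⟪w₁, y - x⟫ + c₂ * ⟪w₂, y - x⟫) = 0 := by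
      rw [hsum0, mul_zero]
    linarith [key₁, key₂, hps]
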